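/- Fix ε > 0 and m ≥ 0. For each t ∈ εℤ with t > 0, Σ_{x ∈ εℤ} P(x,t,m,ε) = 1, where P(x,t,m,ε) := |a(x,t,m,ε)|². -/

import Mathlib

open scoped BigOperators

noncomputable section

/-- Endpoint `x`-coordinate of a checker path of `n` steps encoded by step directions:
`true` = step `(1,1)`, `false` = step `(-1,1)`. -/
def endpt {n : ℕ} (d : Fin n → Bool) : ℤ :=
  ∑ i, (if d i then (1 : ℤ) else -1)

/-- The number of turns of a checker path encoded by step directions. -/
def turns {n : ℕ} (d : Fin n → Bool) : ℕ :=
  ((Finset.range n).filter fun i =>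
    ∃ h : i + 1 < n, d ⟨i, Nat.lt_of_succ_lt h⟩ ≠ d ⟨i + 1, h⟩).card

/-- Checker paths from `(0,0)` to `(x,n)` with the first step to `(1,1)`,
encoded by their step directions. -/
def pathsTo (x : ℤ) (n : ℕ) : Finset (Fin n → Bool) :=
  Finset.univ.filter fun d => (∃ h : 0 < n, d ⟨0, h⟩ = true) ∧ endpt d = x

/-- Feynman checkers with mass `m` and lattice step `ε`: the value `a(εx, εt, m, ε)`,
where `x t : ℤ` are the coordinates in units of `ε`. -/
def am (x t : ℤ) (m ε : ℝ) : ℂ :=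
  (1 + m ^ 2 * ε ^ 2 : ℂ) ^ ((1 - (t : ℂ)) / 2) * Complex.I *
    ∑ d ∈ pathsTo x t.toNat, (-Complex.I * (m * ε)) ^ turns d

/-- The basic model: `a(x,t)`. -/
def a (x t : ℤ) : ℂ :=
  (2 : ℂ) ^ ((1 - (t : ℂ)) / 2) * Complex.I *
    ∑ d ∈ pathsTo x t.toNat, (-Complex.I) ^ turns d

/-! ### Auxiliary lemmas -/

lemma turns_eq {n : ℕ} (d : Fin (n+1) → Bool) :
    turns d = ∑ i : Fin n, if d i.castSucc ≠ d i.succ then 1 else 0 := by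
  unfold turns
  rw [Finset.card_filter, Finset.sum_range_succ]
  have h0 : (if (∃ h : n + 1 < n + 1, d ⟨n, Nat.lt_of_succ_lt h⟩ ≠ d ⟨n + 1, h⟩) then 1 else 0)
      = 0 := by simp
  rw [h0, add_zero, Finset.sum_range fun i => _]
  apply Finset.sum_congr rfl
  intro i _
  have hi : (i : ℕ) + 1 < n + 1 := Nat.succ_lt_succ i.isLt
  simp only [hi, exists_true_left]
  rfl

lemma endpt_snoc {n : ℕ} (e : Fin n → Bool) (b : Bool) :
    endpt (Fin.snoc e b) = endpt e + (if b then 1 else -1) := by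
  unfold endpt
  rw [Fin.sum_univ_castSucc]
  simp [Fin.snoc_castSucc, Fin.snoc_last]

lemma turns_snoc {n : ℕ} (e : Fin (n+1) → Bool) (b : Bool) :
    turns (Fin.snoc e b) = turns e + (if e (Fin.last n) = b then 0 else 1) := by
  rw [turns_eq, turns_eq e, Fin.sum_univ_castSucc]
  congr 1
  · apply Finset.sum_congr rfl
    intro i _
    rw [show (i.castSucc).succ = (i.succ).castSucc from rfl]
    rw [Fin.snoc_castSucc, Fin.snoc_castSucc]
  · rw [show (Fin.last n).succ = Fin.last (n+1) from rfl]
    rw [Fin.snoc_castSucc, Fin.snoc_last]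
    by_cases h : e (Fin.last n) = b <;> simp [h]

lemma abs_endpt_le {n : ℕ} (d : Fin n → Bool) : |endpt d| ≤ (n : ℤ) := by
  unfold endpt
  calc |∑ i, (if d i then (1 : ℤ) else -1)| ≤ ∑ i : Fin n, |if d i then (1:ℤ) else -1| :=
        Finset.abs_sum_le_sum_abs _ _
    _ ≤ ∑ _i : Fin n, 1 := by
        apply Finset.sum_le_sum; intro i _; by_cases h : d i <;> simp [h]
    _ = n := by simp

lemma pathsTo_empty {x : ℤ} {n : ℕ} (h : (n : ℤ) < |x|) : pathsTo x n = ∅ := by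
  ext d
  simp only [pathsTo, Finset.mem_filter, Finset.mem_univ, true_and, Finset.notMem_empty,
    iff_false]
  rintro ⟨-, rfl⟩
  exact absurd (abs_endpt_le d) (not_le.2 h)

lemma mem_pathsTo_succ {x : ℤ} {n : ℕ} (d : Fin (n+1) → Bool) :
    d ∈ pathsTo x (n+1) ↔ d 0 = true ∧ endpt d = x := by
  simp [pathsTo]

lemma sum_last {x : ℤ} {n : ℕ} (b : Bool) (F : (Fin (n+2) → Bool) → ℂ) :
    ∑ d ∈ (pathsTo x (n+2)).filter (fun d => d (Fin.last (n+1)) = b), F d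
      = ∑ e ∈ pathsTo (x - (if b then 1 else -1)) (n+1), F (Fin.snoc e b) := by
  refine (Finset.sum_nbij' (fun d => Fin.init d) (fun e => Fin.snoc e b) ?_ ?_ ?_ ?_ ?_).symm.symm
  · intro d hd
    rw [Finset.mem_filter, mem_pathsTo_succ] at hd
    obtain ⟨⟨h0, hend⟩, hlast⟩ := hd
    rw [mem_pathsTo_succ]
    constructor
    · show Fin.init d 0 = true
      rw [show Fin.init d 0 = d 0 from rfl]
      exact h0
    · have : endpt (Fin.snoc (Fin.init d) b) = endpt (Fin.init d) + (if b then 1 else -1) :=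
        endpt_snoc _ _
      rw [← hlast, Fin.snoc_init_self] at this
      show endpt (Fin.init d) = x - (if b then 1 else -1)
      subst hend
      cases b <;> simp [hlast] at this ⊢ <;> omega
  · intro e he
    rw [mem_pathsTo_succ] at he
    rw [Finset.mem_filter, mem_pathsTo_succ]
    refine ⟨⟨?_, ?_⟩, ?_⟩
    · show (Fin.snoc e b : Fin (n+2) → Bool) 0 = true
      rw [show ((0 : Fin (n+2))) = (Fin.castSucc (0 : Fin (n+1))) from rfl, Fin.snoc_castSucc]
      exact he.1
    · rw [endpt_snoc, he.2]; omega
    · exact Fin.snoc_last _ _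
  · intro d hd
    rw [Finset.mem_filter] at hd
    show Fin.snoc (Fin.init d) b = d
    rw [← hd.2, Fin.snoc_init_self]
  · intro e he
    exact Fin.init_snoc _ _
  · intro d hd
    rw [Finset.mem_filter] at hd
    have h2 : Fin.snoc (Fin.init d) b = d := by rw [← hd.2, Fin.snoc_init_self]
    exact congrArg F h2.symm

/-- The amplitude restricted to paths with a given last step. -/
def Sb (k : ℂ) (x : ℤ) (n : ℕ) (b : Bool) : ℂ :=
  ∑ d ∈ (pathsTo x (n+1)).filter (fun d => d (Fin.last n) = b), k ^ turns d

lemma turns_one (d : Fin 1 → Bool) : turns d = 0 := by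
  unfold turns
  rw [Finset.card_eq_zero, Finset.filter_eq_empty_iff]
  intro i hi
  rw [Finset.mem_range] at hi
  rintro ⟨h, -⟩
  omega

lemma Sb_zero (k : ℂ) (x : ℤ) (b : Bool) :
    Sb k x 0 b = if x = 1 ∧ b = true then 1 else 0 := by
  unfold Sb pathsTo
  rw [Finset.sum_filter, Finset.sum_filter]
  rw [← Equiv.sum_comp (Equiv.funUnique (Fin 1) Bool).symm]
  rw [Fintype.sum_bool]
  simp only [Equiv.funUnique_symm_apply, turns_one, pow_zero]
  have hu : ∀ (c : Bool) (i : Fin 1), (uniqueElim c : Fin 1 → Bool) i = c := fun c i => rfl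
  have e1 : endpt (uniqueElim true : Fin 1 → Bool) = 1 := by simp [endpt, hu]
  have e2 : endpt (uniqueElim false : Fin 1 → Bool) = -1 := by simp [endpt, hu]
  simp only [hu, e1, e2]
  rcases b <;> by_cases hx : x = 1 <;> simp [hx] <;> omega

lemma Sb_succ (k : ℂ) (x : ℤ) (n : ℕ) (b : Bool) :
    Sb k x (n+1) b = Sb k (x - (if b then 1 else -1)) n b
      + k * Sb k (x - (if b then 1 else -1)) n (!b) := by
  unfold Sb
  rw [sum_last b (fun d => k ^ turns d)]
  rw [← Finset.sum_filter_add_sum_filter_not (pathsTo (x - (if b then 1 else -1)) (n+1))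
    (fun e => e (Fin.last n) = b) (fun e => k ^ turns (Fin.snoc e b))]
  congr 1
  · apply Finset.sum_congr rfl
    intro e he
    rw [Finset.mem_filter] at he
    rw [turns_snoc, if_pos he.2, add_zero]
  · rw [Finset.mul_sum]
    have hfil : (pathsTo (x - (if b then 1 else -1)) (n+1)).filter
        (fun e => ¬ e (Fin.last n) = b)
        = (pathsTo (x - (if b then 1 else -1)) (n+1)).filter (fun e => e (Fin.last n) = !b) := by
      apply Finset.filter_congr
      intro e _
      rcases b <;> rcases hc : e (Fin.last n) <;> simp [hc]
    rw [hfil]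
    apply Finset.sum_congr rfl
    intro e he
    rw [Finset.mem_filter] at he
    rw [turns_snoc, if_neg (by rcases b <;> simp_all), pow_succ, mul_comm]

lemma Sb_support {k : ℂ} {x : ℤ} {n : ℕ} (h : ((n:ℤ) + 1) < |x|) (b : Bool) :
    Sb k x n b = 0 := by
  unfold Sb
  rw [pathsTo_empty (by push_cast; omega), Finset.filter_empty, Finset.sum_empty]


lemma Sb_real (k : ℂ) (hk : k.re = 0) (n : ℕ) (x : ℤ) :
    (Sb k x n true).im = 0 ∧ (Sb k x n false).re = 0 := by
  induction n generalizing x with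
  | zero =>
      rw [Sb_zero, Sb_zero]
      constructor <;> by_cases hx : x = 1 <;> simp [hx]
  | succ n ih =>
      rw [Sb_succ, Sb_succ]
      constructor
      · simp only [if_pos, Bool.not_true]
        rw [Complex.add_im, Complex.mul_im, (ih (x-1)).1, (ih (x-1)).2, hk]
        ring
      · simp only [Bool.not_false]
        rw [Complex.add_re, Complex.mul_re, (ih (x - (if false then 1 else -1))).2,
          (ih (x - (if false then 1 else -1))).1, hk]
        ring

lemma cross_term (k B C : ℂ) (hk : k.re = 0) (hB : B.im = 0) (hC : C.re = 0) :
    ‖B + k * C‖ ^ 2 + ‖C + k * B‖ ^ 2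
      = (1 + ‖k‖ ^ 2) * (‖B‖ ^ 2 + ‖C‖ ^ 2) := by
  rw [Complex.sq_norm, Complex.sq_norm, Complex.sq_norm, Complex.sq_norm, Complex.sq_norm]
  simp only [Complex.normSq_apply, Complex.add_re, Complex.add_im, Complex.mul_re,
    Complex.mul_im, hk, hB, hC]
  ring

lemma abs_add_sq_of (B C : ℂ) (hB : B.im = 0) (hC : C.re = 0) :
    ‖B + C‖ ^ 2 = ‖B‖ ^ 2 + ‖C‖ ^ 2 := by
  rw [Complex.sq_norm, Complex.sq_norm, Complex.sq_norm]
  simp only [Complex.normSq_apply, Complex.add_re, Complex.add_im, hB, hC]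
  ring

lemma sum_shift_sub (f : ℤ → ℝ) (a b c : ℤ) :
    ∑ x ∈ Finset.Icc a b, f (x - c) = ∑ y ∈ Finset.Icc (a - c) (b - c), f y := by
  apply Finset.sum_nbij' (fun x => x - c) (fun y => y + c)
  · intro x hx; rw [Finset.mem_Icc] at *; omega
  · intro y hy; rw [Finset.mem_Icc] at *; omega
  · intro x _; omega
  · intro y _; omega
  · intro x _; rfl

lemma sum_shift_add (f : ℤ → ℝ) (a b c : ℤ) :
    ∑ x ∈ Finset.Icc a b, f (x + c) = ∑ y ∈ Finset.Icc (a + c) (b + c), f y := by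
  apply Finset.sum_nbij' (fun x => x + c) (fun y => y - c)
  · intro x hx; rw [Finset.mem_Icc] at *; omega
  · intro y hy; rw [Finset.mem_Icc] at *; omega
  · intro x _; omega
  · intro y _; omega
  · intro x _; rfl

lemma Sb_conserve (k : ℂ) (hk : k.re = 0) (n : ℕ) :
    ∑ x ∈ Finset.Icc (-(n:ℤ) - 1) ((n:ℤ) + 1),
      (‖Sb k x n true‖ ^ 2 + ‖Sb k x n false‖ ^ 2)
      = (1 + ‖k‖ ^ 2) ^ n := by
  induction n with
  | zero =>
      have h01 : (-((0:ℕ):ℤ) - 1) = -1 := by norm_num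
      have h02 : (((0:ℕ):ℤ) + 1) = 1 := by norm_num
      rw [h01, h02, show Finset.Icc (-1 : ℤ) 1 = {-1, 0, 1} from by decide]
      rw [Finset.sum_insert (by decide), Finset.sum_insert (by decide),
        Finset.sum_singleton]
      simp [Sb_zero]
  | succ n ih =>
      have hsupp : ∀ x : ℤ, x ∉ Finset.Icc (-(n:ℤ) - 1) ((n:ℤ) + 1) →
          (‖Sb k x n true‖ ^ 2 + ‖Sb k x n false‖ ^ 2) = 0 := by
        intro x hx
        rw [Finset.mem_Icc] at hx
        rw [Sb_support (lt_abs.2 (by omega)), Sb_support (lt_abs.2 (by omega))]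
        simp
      rw [show ((n+1:ℕ):ℤ) = (n:ℤ)+1 from by push_cast; ring,
        show -((n:ℤ)+1) - 1 = -(n:ℤ)-1-1 from by ring,
        show ((n:ℤ)+1)+1 = (n:ℤ)+1+1 from by ring]
      calc ∑ x ∈ Finset.Icc (-(n:ℤ) - 1 - 1) ((n:ℤ) + 1 + 1),
            (‖Sb k x (n+1) true‖ ^ 2 + ‖Sb k x (n+1) false‖ ^ 2)
          = ∑ x ∈ Finset.Icc (-(n:ℤ) - 1 - 1) ((n:ℤ) + 1 + 1),
            (‖Sb k (x - 1) n true + k * Sb k (x - 1) n false‖ ^ 2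
              + ‖Sb k (x + 1) n false + k * Sb k (x + 1) n true‖ ^ 2) := by
            apply Finset.sum_congr rfl
            intro x _
            rw [Sb_succ, Sb_succ]
            norm_num
        _ = (∑ x ∈ Finset.Icc (-(n:ℤ) - 1 - 1) ((n:ℤ) + 1 + 1),
              ‖Sb k (x - 1) n true + k * Sb k (x - 1) n false‖ ^ 2)
            + ∑ x ∈ Finset.Icc (-(n:ℤ) - 1 - 1) ((n:ℤ) + 1 + 1),
              ‖Sb k (x + 1) n false + k * Sb k (x + 1) n true‖ ^ 2 :=
            Finset.sum_add_distrib
        _ = (∑ y ∈ Finset.Icc (-(n:ℤ) - 1) ((n:ℤ) + 1),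
              ‖Sb k y n true + k * Sb k y n false‖ ^ 2)
            + ∑ y ∈ Finset.Icc (-(n:ℤ) - 1) ((n:ℤ) + 1),
              ‖Sb k y n false + k * Sb k y n true‖ ^ 2 := by
            congr 1
            · rw [sum_shift_sub (fun y => ‖Sb k y n true + k * Sb k y n false‖ ^ 2)
                (-(n:ℤ)-1-1) ((n:ℤ)+1+1) 1]
              refine (Finset.sum_subset (Finset.Icc_subset_Icc (by omega) (by omega)) ?_).symm
              intro y _ hy
              rw [Finset.mem_Icc] at hy
              rw [Sb_support (lt_abs.2 (by omega)), Sb_support (lt_abs.2 (by omega))]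
              simp
            · rw [sum_shift_add (fun y => ‖Sb k y n false + k * Sb k y n true‖ ^ 2)
                (-(n:ℤ)-1-1) ((n:ℤ)+1+1) 1]
              refine (Finset.sum_subset (Finset.Icc_subset_Icc (by omega) (by omega)) ?_).symm
              intro y _ hy
              rw [Finset.mem_Icc] at hy
              rw [Sb_support (lt_abs.2 (by omega)), Sb_support (lt_abs.2 (by omega))]
              simp
        _ = ∑ y ∈ Finset.Icc (-(n:ℤ) - 1) ((n:ℤ) + 1),
              (‖Sb k y n true + k * Sb k y n false‖ ^ 2
                + ‖Sb k y n false + k * Sb k y n true‖ ^ 2) :=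
            Finset.sum_add_distrib.symm
        _ = (1 + ‖k‖ ^ 2) * ∑ x ∈ Finset.Icc (-(n:ℤ) - 1) ((n:ℤ) + 1),
              (‖Sb k x n true‖ ^ 2 + ‖Sb k x n false‖ ^ 2) := by
            rw [Finset.mul_sum]
            apply Finset.sum_congr rfl
            intro x _
            exact cross_term k _ _ hk (Sb_real k hk n x).1 (Sb_real k hk n x).2
        _ = (1 + ‖k‖ ^ 2) ^ (n + 1) := by rw [ih]; ring

lemma T_split (k : ℂ) (x : ℤ) (n : ℕ) :
    ∑ d ∈ pathsTo x (n+1), k ^ turns d = Sb k x n true + Sb k x n false := by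
  unfold Sb
  rw [← Finset.sum_filter_add_sum_filter_not (pathsTo x (n+1)) (fun d => d (Fin.last n) = true)
    (fun d => k ^ turns d)]
  congr 1
  apply Finset.sum_congr _ (fun _ _ => rfl)
  apply Finset.filter_congr
  intro d _
  rcases h : d (Fin.last n) <;> simp [h]

/-- Probability conservation for Feynman checkers with mass m and lattice step ε. -/
theorem probability_conservation_mass (m ε : ℝ) (hε : 0 < ε) (hm : 0 ≤ m)
    (t : ℤ) (ht : 0 < t) :
    ∑' x : ℤ, ‖am x t m ε‖ ^ 2 = 1 := by
  set k : ℂ := -Complex.I * (m * ε) with hkdef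
  have hk : k.re = 0 := by simp [hkdef]
  obtain ⟨n, hn⟩ : ∃ n : ℕ, t.toNat = n + 1 := ⟨t.toNat - 1, by omega⟩
  set R : ℝ := 1 + m ^ 2 * ε ^ 2 with hRdef
  have hR : 0 < R := by positivity
  have habsk : ‖k‖ ^ 2 = m ^ 2 * ε ^ 2 := by
    rw [hkdef, norm_mul, norm_neg, Complex.norm_I, one_mul]
    rw [show ((m : ℂ) * ε) = (((m * ε : ℝ)) : ℂ) from by push_cast; ring, Complex.norm_of_nonneg (by positivity)]
    ring
  have hC : ‖(1 + m ^ 2 * ε ^ 2 : ℂ) ^ ((1 - (t : ℂ)) / 2)‖ ^ 2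
      = R ^ ((1 : ℝ) - t) := by
    have hcast : (1 + m ^ 2 * ε ^ 2 : ℂ) = ((R : ℝ) : ℂ) := by rw [hRdef]; push_cast; ring
    rw [hcast, Complex.norm_cpow_eq_rpow_re_of_pos hR]
    have hre : ((1 - (t : ℂ)) / 2).re = (1 - (t : ℝ)) / 2 := by
      simp [Complex.div_re, Complex.sub_re, Complex.intCast_re]
    rw [hre, ← Real.rpow_natCast (R ^ ((1 - (t:ℝ))/2)) 2, ← Real.rpow_mul hR.le]
    norm_num
  have ham : ∀ x : ℤ, ‖am x t m ε‖ ^ 2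
      = R ^ ((1 : ℝ) - t) *
        (‖Sb k x n true‖ ^ 2 + ‖Sb k x n false‖ ^ 2) := by
    intro x
    rw [am, hn, T_split, norm_mul, norm_mul, Complex.norm_I, mul_one, mul_pow, hC]
    rw [abs_add_sq_of _ _ (Sb_real k hk n x).1 (Sb_real k hk n x).2]
  have hzero : ∀ x : ℤ, x ∉ Finset.Icc (-(n:ℤ) - 1) ((n:ℤ) + 1) →
      ‖am x t m ε‖ ^ 2 = 0 := by
    intro x hx
    rw [Finset.mem_Icc] at hx
    rw [ham x, Sb_support (lt_abs.2 (by omega)), Sb_support (lt_abs.2 (by omega))]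
    simp
  rw [tsum_eq_sum hzero]
  calc ∑ x ∈ Finset.Icc (-(n:ℤ) - 1) ((n:ℤ) + 1), ‖am x t m ε‖ ^ 2
      = R ^ ((1 : ℝ) - t) * ∑ x ∈ Finset.Icc (-(n:ℤ) - 1) ((n:ℤ) + 1),
          (‖Sb k x n true‖ ^ 2 + ‖Sb k x n false‖ ^ 2) := by
        rw [Finset.mul_sum]
        exact Finset.sum_congr rfl fun x _ => ham x
    _ = R ^ ((1 : ℝ) - t) * R ^ (n : ℕ) := by
        rw [Sb_conserve k hk n, habsk, hRdef]
    _ = 1 := by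
        have htn : ((1 : ℝ) - t) = -(n : ℝ) := by
          have : t = (n : ℤ) + 1 := by omega
          rw [this]; push_cast; ring
        rw [htn, ← Real.rpow_natCast R n, ← Real.rpow_add hR]
        norm_num
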